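/- Let p and e be primes with p > 2 and e > 2, and let H = H(F_{p^e}) be the Heisenberg group with commutator subgroup H'. (i) For every subgroup N ≤ H' with |H : N| = p^{2e+2}, there exist linearly independent e×e matrices L_1, L_2 over Z_p with L_1 invertible and the minimal polynomial of L_1^{−1}L_2 irreducible of degree e, such that H/N is isomorphic to B(L_1, L_2). (ii) Conversely, for any linearly independent e×e matrices L_1, L_2 over Z_p with L_1 invertible and the minimal polynomial of L_1^{−1}L_2 irreducible of degree e, the group B(L_1, L_2) is isomorphic to H/N for some subgroup N ≤ H' with |H : N| = p^{2e+2}. -/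

import Mathlib

/-- The Heisenberg group over a field `K`: underlying set `K × K × K` with
multiplication `(α,β,γ)·(α',β',γ') = (α+α', β+β', γ+γ'+α·β')`. -/
def Heisenberg (K : Type) [Field K] : Type := K × K × K

namespace Heisenberg

variable {K : Type} [Field K]

instance : Mul (Heisenberg K) :=
  ⟨fun a b => (a.1 + b.1, a.2.1 + b.2.1, a.2.2 + b.2.2 + a.1 * b.2.1)⟩

instance : One (Heisenberg K) := ⟨((0 : K), (0 : K), (0 : K))⟩

instance : Inv (Heisenberg K) :=
  ⟨fun a => (-a.1, -a.2.1, -a.2.2 + a.1 * a.2.1)⟩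

lemma mul_def (a b : Heisenberg K) :
    a * b = (a.1 + b.1, a.2.1 + b.2.1, a.2.2 + b.2.2 + a.1 * b.2.1) := rfl

lemma one_def : (1 : Heisenberg K) = ((0 : K), (0 : K), (0 : K)) := rfl

lemma inv_def (a : Heisenberg K) : a⁻¹ = (-a.1, -a.2.1, -a.2.2 + a.1 * a.2.1) := rfl

instance : Group (Heisenberg K) where
  mul := (· * ·)
  one := 1
  inv := (·⁻¹)
  mul_assoc a b c := by
    show (a * b) * c = a * (b * c)
    simp only [mul_def]
    refine Prod.ext ?_ (Prod.ext ?_ ?_) <;> dsimp [HMul.hMul, Mul.mul, One.one, Inv.inv] <;>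
      (try simp only [show ∀ x y : K, Mul.mul x y = x * y from fun _ _ => rfl]) <;> ring
  one_mul a := by
    show 1 * a = a
    simp only [mul_def, one_def]
    refine Prod.ext ?_ (Prod.ext ?_ ?_) <;> dsimp [HMul.hMul, Mul.mul, One.one, Inv.inv] <;>
      (try simp only [show ∀ x y : K, Mul.mul x y = x * y from fun _ _ => rfl]) <;> ring
  mul_one a := by
    show a * 1 = a
    simp only [mul_def, one_def]
    refine Prod.ext ?_ (Prod.ext ?_ ?_) <;> dsimp [HMul.hMul, Mul.mul, One.one, Inv.inv] <;>
      (try simp only [show ∀ x y : K, Mul.mul x y = x * y from fun _ _ => rfl]) <;> ring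
  inv_mul_cancel a := by
    show a⁻¹ * a = 1
    simp only [mul_def, one_def, inv_def]
    refine Prod.ext ?_ (Prod.ext ?_ ?_) <;> dsimp [HMul.hMul, Mul.mul, One.one, Inv.inv] <;>
      (try simp only [show ∀ x y : K, Mul.mul x y = x * y from fun _ _ => rfl]) <;> ring

instance [Finite K] : Finite (Heisenberg K) := inferInstanceAs (Finite (K × K × K))

end Heisenberg

open Matrix in
/-- The Brahana-Baer group `B(L 0, …, L (t-1))` determined by a family of `r × s`
matrices over `ZMod p`: underlying set `(ZMod p)^r × (ZMod p)^s × (ZMod p)^t` with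
multiplication `(a,b,c)·(a',b',c') = (a+a', b+b', c+c'+(a L₁ b'ᵀ, …, a L_t b'ᵀ))`. -/
def BGroup (p r s t : ℕ) (L : Fin t → Matrix (Fin r) (Fin s) (ZMod p)) : Type :=
  (Fin r → ZMod p) × (Fin s → ZMod p) × (Fin t → ZMod p)

namespace BGroup

open Matrix

variable {p r s t : ℕ} {L : Fin t → Matrix (Fin r) (Fin s) (ZMod p)}

instance : Mul (BGroup p r s t L) :=
  ⟨fun x y => (x.1 + y.1, x.2.1 + y.2.1,
    fun i => x.2.2 i + y.2.2 i + x.1 ⬝ᵥ (L i).mulVec y.2.1)⟩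

instance : One (BGroup p r s t L) := ⟨(0, 0, 0)⟩

instance : Inv (BGroup p r s t L) :=
  ⟨fun x => (-x.1, -x.2.1, fun i => -x.2.2 i + x.1 ⬝ᵥ (L i).mulVec x.2.1)⟩

lemma mul_def (x y : BGroup p r s t L) :
    x * y = (x.1 + y.1, x.2.1 + y.2.1,
      fun i => x.2.2 i + y.2.2 i + x.1 ⬝ᵥ (L i).mulVec y.2.1) := rfl

lemma one_def : (1 : BGroup p r s t L) = (0, 0, 0) := rfl

lemma inv_def (x : BGroup p r s t L) :
    x⁻¹ = (-x.1, -x.2.1, fun i => -x.2.2 i + x.1 ⬝ᵥ (L i).mulVec x.2.1) := rfl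

instance : Group (BGroup p r s t L) where
  mul := (· * ·)
  one := 1
  inv := (·⁻¹)
  mul_assoc x y z := by
    show (x * y) * z = x * (y * z)
    simp only [mul_def]
    refine Prod.ext ?_ (Prod.ext ?_ ?_) <;> dsimp [HMul.hMul, Mul.mul, One.one, Inv.inv]
    · abel
    · abel
    · funext i
      simp [Matrix.mulVec_add, dotProduct_add, add_dotProduct]
      ring
  one_mul x := by
    show 1 * x = x
    simp only [mul_def, one_def]
    refine Prod.ext ?_ (Prod.ext ?_ ?_) <;> dsimp [HMul.hMul, Mul.mul, One.one, Inv.inv]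
    · abel
    · abel
    · funext i
      simp [zero_dotProduct]
  mul_one x := by
    show x * 1 = x
    simp only [mul_def, one_def]
    refine Prod.ext ?_ (Prod.ext ?_ ?_) <;> dsimp [HMul.hMul, Mul.mul, One.one, Inv.inv]
    · abel
    · abel
    · funext i
      simp [Matrix.mulVec_zero]
  inv_mul_cancel x := by
    show x⁻¹ * x = 1
    simp only [mul_def, one_def, inv_def]
    refine Prod.ext ?_ (Prod.ext ?_ ?_) <;> dsimp [HMul.hMul, Mul.mul, One.one, Inv.inv]
    · abel
    · abel
    · funext i
      simp [neg_dotProduct]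

instance [NeZero p] : Finite (BGroup p r s t L) :=
  inferInstanceAs (Finite (_ × _ × _))

end BGroup

open Matrix

section Core

variable {p e : ℕ} [Fact p.Prime] {K : Type} [Field K]

/-- projection to the abelianization data -/
def heisAb : Heisenberg K →* Multiplicative (K × K) where
  toFun x := Multiplicative.ofAdd (x.1, x.2.1)
  map_one' := rfl
  map_mul' x y := rfl

lemma heis_commutator_le (x : Heisenberg K) (hx : x ∈ commutator (Heisenberg K)) :
    x.1 = 0 ∧ x.2.1 = 0 := by
  have := Abelianization.commutator_subset_ker (heisAb (K := K)) hx
  have h : (Multiplicative.ofAdd ((x.1, x.2.1) : K × K)) = 1 := this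
  have h2 : ((x.1, x.2.1) : K × K) = 0 := h
  exact ⟨congrArg Prod.fst h2, congrArg Prod.snd h2⟩

lemma heis_commutator_ge (γ : K) :
    ((0, 0, γ) : Heisenberg K) ∈ commutator (Heisenberg K) := by
  set x : Heisenberg K := ((1 : K), (0 : K), (0 : K)) with hxd
  set y : Heisenberg K := ((0 : K), γ, (0 : K)) with hyd
  have hmem := Subgroup.commutator_mem_commutator (Subgroup.mem_top x) (Subgroup.mem_top y)
  rw [commutator_def]
  have h : ((0, 0, γ) : Heisenberg K) = x * y * x⁻¹ * y⁻¹ := by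
    show (((0:K),(0:K),γ) : K × K × K) = ((((1:K)+0)+-1)+-0, (((0:K)+γ)+-0)+-γ,
      (((0:K)+0+1*γ)+(-0+1*0)+((1:K)+0)*(-0)) + (-0+0*γ) + (((1:K)+0)+-1)*(-γ))
    refine Prod.ext ?_ (Prod.ext ?_ ?_) <;> dsimp <;> ring
  rw [h, ← commutatorElement_def]
  exact hmem

variable [Fintype K] [Algebra (ZMod p) K]

/-- The homomorphism from the Heisenberg group to a Brahana group. -/
def heisHom (σ τ : K ≃ₗ[ZMod p] (Fin e → ZMod p))
    (lam : Fin 2 → (K →ₗ[ZMod p] ZMod p))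
    (L : Fin 2 → Matrix (Fin e) (Fin e) (ZMod p))
    (H1 : ∀ (i : Fin 2) (α β : K), lam i (α * β) = σ α ⬝ᵥ (L i) *ᵥ τ β) :
    Heisenberg K →* BGroup p e e 2 L where
  toFun x := (σ x.1, τ x.2.1, fun i => lam i x.2.2)
  map_one' := by
    show ((σ 0, τ 0, fun i => lam i 0) : BGroup p e e 2 L) = (0, 0, 0)
    refine Prod.ext (by simp) (Prod.ext (by simp) ?_)
    funext i
    simp
  map_mul' x y := by
    show ((σ (x.1 + y.1), τ (x.2.1 + y.2.1), fun i => lam i (x.2.2 + y.2.2 + x.1 * y.2.1)) :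
      BGroup p e e 2 L) = _
    show _ = ((σ x.1 + σ y.1, τ x.2.1 + τ y.2.1,
      fun i => lam i x.2.2 + lam i y.2.2 + σ x.1 ⬝ᵥ (L i) *ᵥ τ y.2.1) : BGroup p e e 2 L)
    refine Prod.ext ?_ (Prod.ext ?_ ?_) <;> dsimp
    · rw [map_add]
    · rw [map_add]
    · funext i
      rw [map_add, map_add, H1]

lemma heisHom_surjective (σ τ : K ≃ₗ[ZMod p] (Fin e → ZMod p))
    (lam : Fin 2 → (K →ₗ[ZMod p] ZMod p))
    (L : Fin 2 → Matrix (Fin e) (Fin e) (ZMod p))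
    (H1 : ∀ (i : Fin 2) (α β : K), lam i (α * β) = σ α ⬝ᵥ (L i) *ᵥ τ β)
    (H2 : Function.Surjective (fun γ (i : Fin 2) => lam i γ)) :
    Function.Surjective (heisHom σ τ lam L H1) := by
  rintro ⟨a, b, c⟩
  obtain ⟨γ, hγ⟩ := H2 c
  exact ⟨(σ.symm a, τ.symm b, γ), by
    show ((σ (σ.symm a), τ (τ.symm b), fun i => lam i γ) : BGroup p e e 2 L) = _
    rw [σ.apply_symm_apply, τ.apply_symm_apply]
    exact Prod.ext rfl (Prod.ext rfl (funext fun i => congrFun hγ i))⟩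

lemma heisHom_mem_ker (σ τ : K ≃ₗ[ZMod p] (Fin e → ZMod p))
    (lam : Fin 2 → (K →ₗ[ZMod p] ZMod p))
    (L : Fin 2 → Matrix (Fin e) (Fin e) (ZMod p))
    (H1 : ∀ (i : Fin 2) (α β : K), lam i (α * β) = σ α ⬝ᵥ (L i) *ᵥ τ β)
    (x : Heisenberg K) :
    x ∈ (heisHom σ τ lam L H1).ker ↔ x.1 = 0 ∧ x.2.1 = 0 ∧ ∀ i, lam i x.2.2 = 0 := by
  rw [MonoidHom.mem_ker]
  constructor
  · intro h
    have h1 : σ x.1 = 0 := congrArg Prod.fst h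
    have h2 : τ x.2.1 = 0 := congrArg (fun z => z.2.1) h
    have h3 : (fun i => lam i x.2.2) = (0 : Fin 2 → ZMod p) := congrArg (fun z => z.2.2) h
    exact ⟨by simpa using σ.map_eq_zero_iff.mp h1, by simpa using τ.map_eq_zero_iff.mp h2,
      fun i => congrFun h3 i⟩
  · rintro ⟨h1, h2, h3⟩
    show ((σ x.1, τ x.2.1, fun i => lam i x.2.2) : BGroup p e e 2 L) = (0, 0, 0)
    rw [h1, h2, map_zero, map_zero]
    exact Prod.ext rfl (Prod.ext rfl (funext h3))

lemma bgroup_card (L : Fin 2 → Matrix (Fin e) (Fin e) (ZMod p)) :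
    Nat.card (BGroup p e e 2 L) = p ^ (2 * e + 2) := by
  show Nat.card ((Fin e → ZMod p) × (Fin e → ZMod p) × (Fin 2 → ZMod p)) = _
  simp only [Nat.card_eq_fintype_card, Fintype.card_prod, Fintype.card_fun, ZMod.card,
    Fintype.card_fin]
  rw [show 2 * e + 2 = e + (e + 2) by ring, pow_add, pow_add]

end Core

section Bil

variable {p e : ℕ} [Fact p.Prime] {K : Type} [Field K] [Algebra (ZMod p) K]

lemma dot_mulVec_expand (v w : Fin e → ZMod p) (M : Matrix (Fin e) (Fin e) (ZMod p)) :
    v ⬝ᵥ M *ᵥ w = ∑ j, ∑ k, v j * (M j k * w k) := by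
  simp [dotProduct, Matrix.mulVec, Finset.mul_sum]

lemma bil (b : Module.Basis (Fin e) (ZMod p) K) (lam : K →ₗ[ZMod p] ZMod p) (α β : K) :
    lam (α * β) =
      b.equivFun α ⬝ᵥ (Matrix.of fun j k => lam (b j * b k)) *ᵥ b.equivFun β := by
  rw [dot_mulVec_expand]
  conv_lhs => rw [← b.sum_equivFun α, ← b.sum_equivFun β]
  rw [Finset.sum_mul_sum, map_sum]
  simp only [map_sum, smul_mul_smul_comm, _root_.map_smul, smul_eq_mul, Matrix.of_apply]
  refine Finset.sum_congr rfl fun j _ => Finset.sum_congr rfl fun k _ => by ring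

/-- multiplication as a map into the dual -/
noncomputable def mulDual (lam : K →ₗ[ZMod p] ZMod p) :
    K →ₗ[ZMod p] Module.Dual (ZMod p) K where
  toFun c := lam.comp ((LinearMap.mul (ZMod p) K) c)
  map_add' c c' := by ext x; simp [add_mul]
  map_smul' m c := by ext x; simp [smul_mul_assoc]

lemma mulDual_apply (lam : K →ₗ[ZMod p] ZMod p) (c x : K) :
    mulDual lam c x = lam (c * x) := rfl

lemma mulDual_injective {lam : K →ₗ[ZMod p] ZMod p} (hlam : lam ≠ 0) :
    Function.Injective (mulDual (p := p) lam) := by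
  rw [injective_iff_map_eq_zero]
  intro c hc
  by_contra hc0
  apply hlam
  ext y
  simpa [mulDual_apply, mul_inv_cancel_left₀ hc0] using LinearMap.congr_fun hc (c⁻¹ * y)

lemma mulDual_surjective [FiniteDimensional (ZMod p) K] {lam : K →ₗ[ZMod p] ZMod p}
    (hlam : lam ≠ 0) : Function.Surjective (mulDual (p := p) lam) :=
  (LinearMap.injective_iff_surjective_of_finrank_eq_finrank
    (Subspace.dual_finrank_eq).symm).mp (mulDual_injective hlam)

end Bil

section DirI

open Module IntermediateField

variable {p e : ℕ} [Fact p.Prime] {K : Type} [Field K] [Fintype K] [Algebra (ZMod p) K]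

lemma isUnit_of_mulVec_eq_zero {M : Matrix (Fin e) (Fin e) (ZMod p)}
    (h : ∀ x, M *ᵥ x = 0 → x = 0) : IsUnit M := by
  have hker : LinearMap.ker (Matrix.toLinAlgEquiv' M) = ⊥ :=
    LinearMap.ker_eq_bot'.mpr fun x hx => h x (by rwa [Matrix.toLinAlgEquiv'_apply] at hx)
  have hu : IsUnit (Matrix.toLinAlgEquiv' (R := ZMod p) M) :=
    (LinearMap.isUnit_iff_ker_eq_bot _).mpr hker
  have h2 := hu.map (Matrix.toLinAlgEquiv' (n := Fin e) (R := ZMod p)).symm.toRingHom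
  simpa using h2

theorem dirI (he : e.Prime) (he2 : 2 < e) (hrank : Module.finrank (ZMod p) K = e)
    (N : Subgroup (Heisenberg K)) (hn : N.Normal)
    (hle : N ≤ commutator (Heisenberg K)) (hidx : N.index = p ^ (2 * e + 2)) :
    ∃ L₁ L₂ : Matrix (Fin e) (Fin e) (ZMod p),
      LinearIndependent (ZMod p) ![L₁, L₂] ∧ IsUnit L₁ ∧
      Irreducible (minpoly (ZMod p) (L₁⁻¹ * L₂)) ∧
      (minpoly (ZMod p) (L₁⁻¹ * L₂)).natDegree = e ∧
      Nonempty ((Heisenberg K ⧸ N) ≃* BGroup p e e 2 ![L₁, L₂]) := by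
  haveI := hn
  haveI : FiniteDimensional (ZMod p) K := Module.Finite.of_finite
  have hp1 : 1 < p := (Fact.out : p.Prime).one_lt
  haveI : Nonempty (Fin e) := ⟨⟨0, by omega⟩⟩
  -- the subgroup of the center corresponding to N
  let ι : Multiplicative K →* Heisenberg K :=
    { toFun := fun γ => (0, 0, γ.toAdd)
      map_one' := rfl
      map_mul' := by
        intro a b
        show ((0, 0, (a * b).toAdd) : Heisenberg K) =
          (((0:K) + 0, (0:K) + 0, a.toAdd + b.toAdd + 0 * 0) : K × K × K)
        refine Prod.ext ?_ (Prod.ext ?_ ?_) <;> dsimp <;> ring }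
  let W : Submodule (ZMod p) K := AddSubgroup.toZModSubmodule p ((N.comap ι).toAddSubgroup')
  have hmemW : ∀ γ : K, γ ∈ W ↔ ((0, 0, γ) : Heisenberg K) ∈ N := fun γ => Iff.rfl
  have hN : ∀ x : Heisenberg K, x ∈ N ↔ x.1 = 0 ∧ x.2.1 = 0 ∧ x.2.2 ∈ W := by
    intro x
    constructor
    · intro hx
      obtain ⟨h1, h2⟩ := heis_commutator_le x (hle hx)
      have hx' : x = (0, 0, x.2.2) := Prod.ext h1 (Prod.ext h2 rfl)
      exact ⟨h1, h2, (hmemW _).mpr (hx' ▸ hx)⟩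
    · rintro ⟨h1, h2, h3⟩
      have hx' : x = (0, 0, x.2.2) := Prod.ext h1 (Prod.ext h2 rfl)
      rw [hx']
      exact (hmemW _).mp h3
  -- cardinalities
  have hcardK : Nat.card K = p ^ e := by
    rw [Nat.card_eq_fintype_card, card_eq_pow_finrank (K := ZMod p) (V := K), ZMod.card, hrank]
  have hcardH : Nat.card (Heisenberg K) = p ^ (2 * e + 2) * p ^ (e - 2) := by
    show Nat.card (K × K × K) = _
    rw [Nat.card_prod, Nat.card_prod, hcardK, ← pow_add, ← pow_add, ← pow_add]
    congr 1
    omega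
  have hNW : Nat.card N = Nat.card W := by
    refine Nat.card_congr ⟨fun x => ⟨x.1.2.2, ((hN _).mp x.2).2.2⟩,
      fun γ => ⟨(0, 0, γ.1), (hN _).mpr ⟨rfl, rfl, γ.2⟩⟩, fun x => ?_, fun γ => rfl⟩
    obtain ⟨h1, h2, -⟩ := (hN _).mp x.2
    exact Subtype.ext (Prod.ext h1.symm (Prod.ext h2.symm rfl))
  have hcardN : Nat.card N = p ^ (e - 2) := by
    have := Subgroup.index_mul_card N
    rw [hidx, hcardH] at this
    exact Nat.eq_of_mul_eq_mul_left (pow_pos (by omega) _) this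
  have hcardW : Nat.card W = p ^ (e - 2) := hNW ▸ hcardN
  have hfrW : Module.finrank (ZMod p) W = e - 2 := by
    haveI : Fintype W := Fintype.ofFinite W
    have h1 : Fintype.card W = p ^ Module.finrank (ZMod p) W := by
      rw [card_eq_pow_finrank (K := ZMod p) (V := W), ZMod.card]
    have h2 : p ^ Module.finrank (ZMod p) W = p ^ (e - 2) := by
      rw [← h1, ← Nat.card_eq_fintype_card, hcardW]
    exact Nat.pow_right_injective (by omega : 2 ≤ p) h2
  have hfrQ : Module.finrank (ZMod p) (K ⧸ W) = 2 := by
    have h := Submodule.finrank_quotient_add_finrank W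
    rw [hfrW, hrank] at h
    omega
  -- the two functionals
  let c2 : Basis (Fin 2) (ZMod p) (K ⧸ W) := (Module.finBasis (ZMod p) (K ⧸ W)).reindex (finCongr hfrQ)
  let J : K →ₗ[ZMod p] (Fin 2 → ZMod p) := (c2.equivFun : (K ⧸ W) →ₗ[ZMod p] (Fin 2 → ZMod p)).comp W.mkQ
  let lam : Fin 2 → (K →ₗ[ZMod p] ZMod p) := fun i => (LinearMap.proj i).comp J
  have hJsurj : Function.Surjective J := c2.equivFun.surjective.comp W.mkQ_surjective
  have hsurj' : Function.Surjective (fun γ (i : Fin 2) => lam i γ) := hJsurj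
  have hlamW : ∀ γ : K, (∀ i, lam i γ = 0) ↔ γ ∈ W := by
    intro γ
    constructor
    · intro h
      have hJ0 : J γ = 0 := funext h
      have : c2.equivFun (W.mkQ γ) = 0 := hJ0
      rw [LinearEquiv.map_eq_zero_iff] at this
      rw [Submodule.mkQ_apply, Submodule.Quotient.mk_eq_zero] at this
      exact this
    · intro h i
      show J γ i = 0
      have : W.mkQ γ = 0 := by rwa [Submodule.mkQ_apply, Submodule.Quotient.mk_eq_zero]
      show c2.equivFun (W.mkQ γ) i = 0
      rw [this, map_zero]
      rfl
  -- the basis of K and matrices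
  let b : Basis (Fin e) (ZMod p) K := (Module.finBasis (ZMod p) K).reindex (finCongr hrank)
  let L : Fin 2 → Matrix (Fin e) (Fin e) (ZMod p) := fun i => Matrix.of fun j k => lam i (b j * b k)
  have H1 : ∀ (i : Fin 2) (α β : K), lam i (α * β) = b.equivFun α ⬝ᵥ (L i) *ᵥ b.equivFun β :=
    fun i α β => bil b (lam i) α β
  let f := heisHom b.equivFun b.equivFun lam L H1
  have hfs : Function.Surjective f := heisHom_surjective b.equivFun b.equivFun lam L H1 hsurj'
  have hker : f.ker = N := by
    ext x
    rw [heisHom_mem_ker, hN x]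
    exact and_congr_right fun _ => and_congr_right fun _ => hlamW _
  have iso : (Heisenberg K ⧸ N) ≃* BGroup p e e 2 L :=
    (QuotientGroup.quotientMulEquivOfEq hker.symm).trans
      (QuotientGroup.quotientKerEquivOfSurjective f hfs)
  -- nontriviality of the first functional
  have hlam0 : lam 0 ≠ 0 := by
    intro h0
    obtain ⟨γ, hγ⟩ := hJsurj (Pi.single 0 1)
    have h1 : lam 0 γ = 1 := by
      show J γ 0 = 1
      rw [hγ, Pi.single_eq_same]
    rw [h0] at h1
    simp at h1
  -- the field element θ
  obtain ⟨θ, hθ⟩ := mulDual_surjective hlam0 (lam 1)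
  have hθap : ∀ γ, lam 1 γ = lam 0 (θ * γ) := fun γ => (LinearMap.congr_fun hθ γ).symm
  have hθnot : θ ∉ Set.range (algebraMap (ZMod p) K) := by
    rintro ⟨a, ha⟩
    obtain ⟨γ, hγ⟩ := hJsurj (Pi.single 1 1)
    have h0 : lam 0 γ = 0 := by
      show J γ 0 = 0
      rw [hγ]
      simp [Pi.single_apply]
    have h1 : lam 1 γ = 1 := by
      show J γ 1 = 1
      rw [hγ, Pi.single_eq_same]
    rw [hθap γ, ← ha, ← Algebra.smul_def, _root_.map_smul, h0, smul_zero] at h1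
    exact one_ne_zero h1.symm
  have hint : IsIntegral (ZMod p) θ := IsIntegral.of_finite (ZMod p) θ
  have hirrθ : Irreducible (minpoly (ZMod p) θ) := minpoly.irreducible hint
  have hdegθ : (minpoly (ZMod p) θ).natDegree = e := by
    have had := IntermediateField.adjoin.finrank hint
    have htower : Module.finrank (ZMod p) (ZMod p)⟮θ⟯ * Module.finrank (ZMod p)⟮θ⟯ K =
        Module.finrank (ZMod p) K := Module.finrank_mul_finrank _ _ _
    have hdvd : Module.finrank (ZMod p) (ZMod p)⟮θ⟯ ∣ e :=
      ⟨Module.finrank (ZMod p)⟮θ⟯ K, by rw [← hrank, ← htower]⟩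
    rcases (Nat.Prime.eq_one_or_self_of_dvd he _ hdvd) with h1 | h1
    · exfalso
      have hbot : (ZMod p)⟮θ⟯ = ⊥ := IntermediateField.finrank_eq_one_iff.mp h1
      have hθmem : θ ∈ (ZMod p)⟮θ⟯ := IntermediateField.mem_adjoin_simple_self (ZMod p) θ
      rw [hbot, IntermediateField.mem_bot] at hθmem
      exact hθnot hθmem
    · rw [← had, h1]
  -- the multiplication matrix
  let Ψ : K →ₐ[ZMod p] Matrix (Fin e) (Fin e) (ZMod p) :=
    (LinearMap.toMatrixAlgEquiv b).toAlgHom.comp (Algebra.lmul (ZMod p) K)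
  have hΨinj : Function.Injective Ψ := RingHom.injective (Ψ : K →+* Matrix (Fin e) (Fin e) (ZMod p))
  let M := Ψ θ
  have hminM : minpoly (ZMod p) M = minpoly (ZMod p) θ := minpoly.algHom_eq Ψ hΨinj θ
  have hMapp : ∀ l k, M l k = b.repr (θ * b k) l := by
    intro l k
    show (LinearMap.toMatrixAlgEquiv b) (Algebra.lmul (ZMod p) K θ) l k = _
    rw [LinearMap.toMatrixAlgEquiv_apply]
    congr 1
  have hL2 : L 1 = L 0 * M := by
    ext j k
    rw [Matrix.mul_apply]
    have key : (∑ l, lam 0 (b j * b l) * b.repr (θ * b k) l) = lam 0 (b j * (θ * b k)) := by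
      conv_rhs => rw [← Basis.sum_repr b (θ * b k)]
      rw [Finset.mul_sum, map_sum]
      simp only [mul_smul_comm, _root_.map_smul, smul_eq_mul]
      exact Finset.sum_congr rfl fun l _ => by ring
    have hLL : ∀ (i : Fin 2) j k, L i j k = lam i (b j * b k) := fun _ _ _ => rfl
    simp only [hLL, hMapp]
    rw [key, hθap]
    congr 1
    ring
  -- invertibility of L 0
  have hunit : IsUnit (L 0) := by
    apply isUnit_of_mulVec_eq_zero
    intro x hx
    set β := b.equivFun.symm x with hβ
    have hxβ : b.equivFun β = x := b.equivFun.apply_symm_apply x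
    have hall : ∀ α : K, lam 0 (α * β) = 0 := by
      intro α
      rw [H1 0 α β, hxβ, hx, dotProduct_zero]
    have hβ0 : β = 0 := by
      by_contra hb
      apply hlam0
      ext y
      have hy := hall (y * β⁻¹)
      rw [mul_assoc, inv_mul_cancel₀ hb, mul_one] at hy
      simpa using hy
    rw [← hxβ, hβ0, map_zero]
  -- linear independence
  have hLI : LinearIndependent (ZMod p) ![L 0, L 1] := by
    rw [LinearIndependent.pair_iff]
    intro s t hst
    have hμ : ∀ γ : K, s * lam 0 γ + t * lam 1 γ = 0 := by
      intro γ
      have h1 : (Matrix.of fun j k => (s • lam 0 + t • lam 1) (b j * b k)) =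
          (0 : Matrix (Fin e) (Fin e) (ZMod p)) := by
        ext j k
        have h2 : (s • L 0 + t • L 1) j k = 0 := by rw [hst]; rfl
        simp [Matrix.add_apply, Matrix.smul_apply, smul_eq_mul] at h2 ⊢
        exact h2
      have h2 := bil b (s • lam 0 + t • lam 1) γ 1
      rw [mul_one, h1] at h2
      simpa using h2
    have hcz : algebraMap (ZMod p) K s + t • θ = 0 := by
      apply mulDual_injective hlam0
      rw [map_zero]
      ext γ
      rw [mulDual_apply]
      have hexp : (algebraMap (ZMod p) K s + t • θ) * γ = s • γ + t • (θ * γ) := by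
        rw [add_mul, ← Algebra.smul_def, smul_mul_assoc]
      rw [hexp, map_add, _root_.map_smul, _root_.map_smul, smul_eq_mul, smul_eq_mul, ← hθap]
      simpa using hμ γ
    by_cases ht : t = 0
    · subst ht
      rw [zero_smul, add_zero] at hcz
      have hs : s = 0 := by
        have := (algebraMap (ZMod p) K).injective
        exact this (by rw [hcz, map_zero])
      exact ⟨hs, rfl⟩
    · exfalso
      apply hθnot
      refine ⟨-(t⁻¹ * s), ?_⟩
      have htθ : t • θ = -(algebraMap (ZMod p) K s) := by
        rw [eq_neg_iff_add_eq_zero, add_comm]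
        exact hcz
      have : θ = t⁻¹ • (t • θ) := by rw [smul_smul, inv_mul_cancel₀ ht, one_smul]
      rw [this, htθ, smul_neg, Algebra.smul_def, ← _root_.map_mul, ← _root_.map_neg]
  -- conclusion
  have hLM : (L 0)⁻¹ * L 1 = M := by
    rw [hL2, ← Matrix.mul_assoc,
      Matrix.nonsing_inv_mul _ ((Matrix.isUnit_iff_isUnit_det _).mp hunit), one_mul]
  have hLeta : ![L 0, L 1] = L := by
    funext i
    fin_cases i <;> rfl
  refine ⟨L 0, L 1, hLI, hunit, ?_, ?_, ⟨?_⟩⟩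
  · rw [hLM, hminM]; exact hirrθ
  · rw [hLM, hminM, hdegθ]
  · rw [hLeta]; exact iso

end DirI

section DirII

open Module Polynomial

variable {p e : ℕ} [Fact p.Prime] {K : Type} [Field K] [Fintype K] [Algebra (ZMod p) K]

theorem dirII (he2 : 2 < e) (hrank : Module.finrank (ZMod p) K = e)
    (L₁ L₂ : Matrix (Fin e) (Fin e) (ZMod p))
    (hunit : IsUnit L₁)
    (hirr : Irreducible (minpoly (ZMod p) (L₁⁻¹ * L₂)))
    (hdeg : (minpoly (ZMod p) (L₁⁻¹ * L₂)).natDegree = e) :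
    ∃ (N : Subgroup (Heisenberg K)) (_ : N.Normal),
      N ≤ commutator (Heisenberg K) ∧ N.index = p ^ (2 * e + 2) ∧
      Nonempty (BGroup p e e 2 ![L₁, L₂] ≃* (Heisenberg K ⧸ N)) := by
  haveI : FiniteDimensional (ZMod p) K := Module.Finite.of_finite
  haveI : Nonempty (Fin e) := ⟨⟨0, by omega⟩⟩
  have hdet : IsUnit L₁.det := (Matrix.isUnit_iff_isUnit_det _).mp hunit
  set A := L₁⁻¹ * L₂ with hA
  set fpol := minpoly (ZMod p) A with hf
  have hint : IsIntegral (ZMod p) A := IsIntegral.of_finite (ZMod p) A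
  have hmon : fpol.Monic := minpoly.monic hint
  have hfne : fpol ≠ 0 := hmon.ne_zero
  haveI : Fact (Irreducible fpol) := ⟨hirr⟩
  haveI : Module.Finite (ZMod p) (AdjoinRoot fpol) :=
    Module.Finite.of_basis (AdjoinRoot.powerBasis hfne).basis
  haveI : Finite (AdjoinRoot fpol) := Module.finite_of_finite (ZMod p)
  haveI : Fintype (AdjoinRoot fpol) := Fintype.ofFinite _
  have hfr : Module.finrank (ZMod p) (AdjoinRoot fpol) = e := by
    rw [(AdjoinRoot.powerBasis hfne).finrank, AdjoinRoot.powerBasis_dim, ← hdeg]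
  have hcardA : Fintype.card (AdjoinRoot fpol) = Fintype.card K := by
    rw [card_eq_pow_finrank (K := ZMod p) (V := AdjoinRoot fpol),
      card_eq_pow_finrank (K := ZMod p) (V := K), hfr, hrank]
  let ε : AdjoinRoot fpol ≃ₐ[ZMod p] K := FiniteField.algEquivOfCardEq p hcardA
  let θ : K := ε (AdjoinRoot.root fpol)
  have hθmin : minpoly (ZMod p) θ = fpol := by
    show minpoly (ZMod p) (ε (AdjoinRoot.root fpol)) = fpol
    rw [minpoly.algEquiv_eq, AdjoinRoot.minpoly_root hfne, hmon.leadingCoeff, inv_one,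
      Polynomial.C_1, mul_one]
  -- the algebra map into matrices
  have hli : ∀ g ∈ Ideal.span {fpol}, (Polynomial.aeval A) g = 0 := by
    intro g hg
    rw [Ideal.mem_span_singleton] at hg
    obtain ⟨c, rfl⟩ := hg
    rw [_root_.map_mul, minpoly.aeval, zero_mul]
  let Φ0 : AdjoinRoot fpol →ₐ[ZMod p] Matrix (Fin e) (Fin e) (ZMod p) :=
    Ideal.Quotient.liftₐ (Ideal.span {fpol}) (Polynomial.aeval A) hli
  let Φ : K →ₐ[ZMod p] Matrix (Fin e) (Fin e) (ZMod p) := Φ0.comp ε.symm.toAlgHom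
  have hΦθ : Φ θ = A := by
    show Φ0 (ε.symm (ε (AdjoinRoot.root fpol))) = A
    rw [ε.symm_apply_apply]
    show (Polynomial.aeval A) Polynomial.X = A
    rw [Polynomial.aeval_X]
  have hΦunit : ∀ γ : K, γ ≠ 0 → IsUnit (Φ γ) := fun γ hγ =>
    (isUnit_iff_ne_zero.mpr hγ).map Φ
  -- cancellation helpers
  have hmulVec_unit : ∀ (Mx : Matrix (Fin e) (Fin e) (ZMod p)) (v : Fin e → ZMod p),
      IsUnit Mx → Mx *ᵥ v = 0 → v = 0 := by
    intro Mx v hu hv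
    obtain ⟨U, hU⟩ := hu
    have h1 : ((U⁻¹ : _ˣ) : Matrix (Fin e) (Fin e) (ZMod p)) * Mx = 1 := by
      rw [← hU, U.inv_mul]
    calc v = (1 : Matrix (Fin e) (Fin e) (ZMod p)) *ᵥ v := (Matrix.one_mulVec v).symm
    _ = ((U⁻¹ : _ˣ) : Matrix (Fin e) (Fin e) (ZMod p)) *ᵥ (Mx *ᵥ v) := by
        rw [Matrix.mulVec_mulVec, h1]
    _ = 0 := by rw [hv, Matrix.mulVec_zero]
  have hvecMul_unit : ∀ (Mx : Matrix (Fin e) (Fin e) (ZMod p)) (v : Fin e → ZMod p),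
      IsUnit Mx → v ᵥ* Mx = 0 → v = 0 := by
    intro Mx v hu hv
    obtain ⟨U, hU⟩ := hu
    have h1 : Mx * ((U⁻¹ : _ˣ) : Matrix (Fin e) (Fin e) (ZMod p)) = 1 := by
      rw [← hU, U.mul_inv]
    calc v = v ᵥ* (1 : Matrix (Fin e) (Fin e) (ZMod p)) := (Matrix.vecMul_one v).symm
    _ = (v ᵥ* Mx) ᵥ* ((U⁻¹ : _ˣ) : Matrix (Fin e) (Fin e) (ZMod p)) := by
        rw [Matrix.vecMul_vecMul, h1]
    _ = 0 := by rw [hv, Matrix.zero_vecMul]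
  -- the vector
  let i0 : Fin e := ⟨0, by omega⟩
  let w : Fin e → ZMod p := Pi.single i0 1
  have hw : w ≠ 0 := by
    intro h
    have h1 : w i0 = 1 := Pi.single_eq_same i0 1
    rw [h] at h1
    simp at h1
  -- τ
  let τlin : K →ₗ[ZMod p] (Fin e → ZMod p) :=
    { toFun := fun γ => (Φ γ) *ᵥ w
      map_add' := by intro x y; simp [Matrix.add_mulVec]
      map_smul' := by intro c x; simp [Matrix.smul_mulVec] }
  have hτinj : Function.Injective τlin := by
    rw [injective_iff_map_eq_zero]
    intro γ hγ
    by_contra hγ0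
    exact hw (hmulVec_unit _ _ (hΦunit γ hγ0) hγ)
  have hfrV : Module.finrank (ZMod p) (Fin e → ZMod p) = e := Module.finrank_fin_fun (ZMod p)
  have hτbij : Function.Bijective τlin :=
    ⟨hτinj, (LinearMap.injective_iff_surjective_of_finrank_eq_finrank
      (by rw [hrank, hfrV])).mp hτinj⟩
  let τ : K ≃ₗ[ZMod p] (Fin e → ZMod p) := LinearEquiv.ofBijective τlin hτbij
  have hsmul_vecMul : ∀ (v : Fin e → ZMod p) (c : ZMod p) (Mx : Matrix (Fin e) (Fin e) (ZMod p)),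
      v ᵥ* (c • Mx) = c • (v ᵥ* Mx) := by
    intro v c Mx
    funext i
    simp only [Matrix.vecMul, dotProduct, Matrix.smul_apply, Pi.smul_apply, smul_eq_mul,
      Finset.mul_sum]
    exact Finset.sum_congr rfl fun j _ => by ring
  -- σ
  let σlin : K →ₗ[ZMod p] (Fin e → ZMod p) :=
    { toFun := fun γ => w ᵥ* (L₁ * Φ γ * L₁⁻¹)
      map_add' := by intro x y; simp [Matrix.mul_add, Matrix.add_mul, Matrix.vecMul_add]
      map_smul' := by intro c x; simp [Matrix.mul_smul, Matrix.smul_mul, hsmul_vecMul] }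
  have hσinj : Function.Injective σlin := by
    rw [injective_iff_map_eq_zero]
    intro γ hγ
    by_contra hγ0
    have hU : IsUnit (L₁ * Φ γ * L₁⁻¹) :=
      (hunit.mul (hΦunit γ hγ0)).mul (Matrix.isUnit_nonsing_inv_iff.mpr hunit)
    exact hw (hvecMul_unit _ _ hU hγ)
  have hσbij : Function.Bijective σlin :=
    ⟨hσinj, (LinearMap.injective_iff_surjective_of_finrank_eq_finrank
      (by rw [hrank, hfrV])).mp hσinj⟩
  let σ : K ≃ₗ[ZMod p] (Fin e → ZMod p) := LinearEquiv.ofBijective σlin hσbij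
  -- the functionals
  let lam0 : K →ₗ[ZMod p] ZMod p :=
    { toFun := fun γ => w ⬝ᵥ (L₁ * Φ γ) *ᵥ w
      map_add' := by intro x y; simp [Matrix.mul_add, Matrix.add_mulVec, dotProduct_add]
      map_smul' := by intro c x
                      simp [Matrix.mul_smul, Matrix.smul_mulVec, dotProduct_smul] }
  let lam : Fin 2 → (K →ₗ[ZMod p] ZMod p) := ![lam0, lam0.comp ((LinearMap.mul (ZMod p) K) θ)]
  have hlam1 : ∀ γ, lam 1 γ = lam0 (θ * γ) := fun γ => rfl
  have hσL1 : ∀ α : K, σ α ᵥ* L₁ = w ᵥ* (L₁ * Φ α) := by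
    intro α
    show (w ᵥ* (L₁ * Φ α * L₁⁻¹)) ᵥ* L₁ = _
    rw [Matrix.vecMul_vecMul, Matrix.mul_assoc (L₁ * Φ α), Matrix.nonsing_inv_mul _ hdet,
      Matrix.mul_one]
  have hL₂A : L₁ * A = L₂ := by
    rw [hA, Matrix.mul_nonsing_inv_cancel_left _ _ hdet]
  have hσL2 : ∀ α : K, σ α ᵥ* L₂ = w ᵥ* (L₁ * Φ (α * θ)) := by
    intro α
    show (w ᵥ* (L₁ * Φ α * L₁⁻¹)) ᵥ* L₂ = _
    rw [Matrix.vecMul_vecMul, ← hL₂A, Matrix.mul_assoc (L₁ * Φ α), 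
      Matrix.nonsing_inv_mul_cancel_left _ _ hdet, _root_.map_mul, hΦθ, Matrix.mul_assoc]
  have H1 : ∀ (i : Fin 2) (α β : K), lam i (α * β) = σ α ⬝ᵥ (![L₁, L₂] i) *ᵥ τ β := by
    intro i α β
    fin_cases i
    · show lam0 (α * β) = σ α ⬝ᵥ L₁ *ᵥ τ β
      rw [dotProduct_mulVec, hσL1, ← dotProduct_mulVec]
      show w ⬝ᵥ (L₁ * Φ (α * β)) *ᵥ w = w ⬝ᵥ (L₁ * Φ α) *ᵥ (Φ β *ᵥ w)
      rw [Matrix.mulVec_mulVec, Matrix.mul_assoc, ← _root_.map_mul]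
    · show lam0 (θ * (α * β)) = σ α ⬝ᵥ L₂ *ᵥ τ β
      rw [dotProduct_mulVec, hσL2, ← dotProduct_mulVec]
      show w ⬝ᵥ (L₁ * Φ (θ * (α * β))) *ᵥ w = w ⬝ᵥ (L₁ * Φ (α * θ)) *ᵥ (Φ β *ᵥ w)
      rw [Matrix.mulVec_mulVec, Matrix.mul_assoc, ← _root_.map_mul]
      have : θ * (α * β) = α * θ * β := by ring
      rw [this]
  -- lam0 ≠ 0
  have hlam0ne : lam0 ≠ 0 := by
    intro h0
    have huL : w ᵥ* L₁ ≠ 0 := fun hc => hw (hvecMul_unit _ _ hunit hc)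
    obtain ⟨j, hj⟩ : ∃ j, (w ᵥ* L₁) j ≠ 0 := by
      by_contra hcon
      push_neg at hcon
      exact huL (funext hcon)
    obtain ⟨γ, hγ⟩ := hτbij.2 (Pi.single j 1)
    have hval : lam0 γ = (w ᵥ* L₁) j := by
      show w ⬝ᵥ (L₁ * Φ γ) *ᵥ w = _
      rw [← Matrix.mulVec_mulVec, dotProduct_mulVec,
        show (Φ γ) *ᵥ w = Pi.single j 1 from hγ, dotProduct_single, mul_one]
    rw [h0] at hval
    exact hj (by simpa using hval.symm)
  -- θ is not in the prime field
  have hθnot : θ ∉ Set.range (algebraMap (ZMod p) K) := by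
    rintro ⟨a, ha⟩
    have h1 : (minpoly (ZMod p) θ).natDegree = 1 := by
      rw [← ha, minpoly.eq_X_sub_C, natDegree_X_sub_C]
    rw [hθmin] at h1
    omega
  -- joint surjectivity
  let J : K →ₗ[ZMod p] (Fin 2 → ZMod p) := LinearMap.pi (fun i => lam i)
  have hJ : Function.Surjective J := by
    rw [← LinearMap.dualMap_injective_iff]
    rw [injective_iff_map_eq_zero]
    intro ψ hψ
    have hψv : ∀ v : Fin 2 → ZMod p,
        ψ v = v 0 * ψ (Pi.single 0 1) + v 1 * ψ (Pi.single 1 1) := by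
      intro v
      have hv : v = v 0 • (Pi.single 0 1 : Fin 2 → ZMod p) +
          v 1 • (Pi.single 1 1 : Fin 2 → ZMod p) := by
        funext x
        fin_cases x <;> simp [Pi.single_apply]
      conv_lhs => rw [hv]
      rw [map_add, _root_.map_smul, _root_.map_smul, smul_eq_mul, smul_eq_mul]
    set s := ψ (Pi.single 0 1) with hs
    set t := ψ (Pi.single 1 1) with ht
    have hcomp : ∀ γ : K, s * lam0 γ + t * lam0 (θ * γ) = 0 := by
      intro γ
      have h1 := LinearMap.congr_fun hψ γ
      simp only [LinearMap.zero_apply] at h1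
      rw [LinearMap.dualMap_apply, hψv (J γ)] at h1
      have hJ0 : J γ 0 = lam0 γ := rfl
      have hJ1 : J γ 1 = lam0 (θ * γ) := rfl
      rw [hJ0, hJ1] at h1
      linear_combination h1
    have hkey : ∀ γ : K, lam0 ((algebraMap (ZMod p) K s + t • θ) * γ) = 0 := by
      intro γ
      have hexp : (algebraMap (ZMod p) K s + t • θ) * γ = s • γ + t • (θ * γ) := by
        rw [add_mul, ← Algebra.smul_def, smul_mul_assoc]
      rw [hexp, map_add, _root_.map_smul, _root_.map_smul, smul_eq_mul, smul_eq_mul]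
      exact hcomp γ
    have hc0 : algebraMap (ZMod p) K s + t • θ = 0 := by
      by_contra hcne
      apply hlam0ne
      ext y
      have h1 := hkey ((algebraMap (ZMod p) K s + t • θ)⁻¹ * y)
      rw [← mul_assoc, mul_inv_cancel₀ hcne, one_mul] at h1
      simpa using h1
    have hst : s = 0 ∧ t = 0 := by
      by_cases htz : t = 0
      · rw [htz, zero_smul, add_zero] at hc0
        exact ⟨(algebraMap (ZMod p) K).injective (by rw [hc0, map_zero]), htz⟩
      · exfalso
        apply hθnot
        refine ⟨-(t⁻¹ * s), ?_⟩
        have htθ : t • θ = -(algebraMap (ZMod p) K s) := by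
          rw [eq_neg_iff_add_eq_zero, add_comm]
          exact hc0
        have hθeq : θ = t⁻¹ • (t • θ) := by rw [smul_smul, inv_mul_cancel₀ htz, one_smul]
        rw [hθeq, htθ, smul_neg, Algebra.smul_def, ← _root_.map_mul, ← _root_.map_neg]
    refine LinearMap.ext fun v => ?_
    rw [hψv v, hst.1, hst.2]
    simp
  have hsurj' : Function.Surjective (fun γ (i : Fin 2) => lam i γ) := hJ
  -- conclusion
  let f := heisHom σ τ lam ![L₁, L₂] H1
  have hfs : Function.Surjective f := heisHom_surjective σ τ lam ![L₁, L₂] H1 hsurj'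
  refine ⟨f.ker, MonoidHom.normal_ker f, ?_, ?_, ⟨?_⟩⟩
  · intro x hx
    obtain ⟨h1, h2, -⟩ := (heisHom_mem_ker σ τ lam ![L₁, L₂] H1 x).mp hx
    have hx' : x = (0, 0, x.2.2) := Prod.ext h1 (Prod.ext h2 rfl)
    rw [hx']
    exact heis_commutator_ge x.2.2
  · calc f.ker.index = Nat.card (Heisenberg K ⧸ f.ker) := rfl
    _ = Nat.card (BGroup p e e 2 ![L₁, L₂]) :=
        Nat.card_congr (QuotientGroup.quotientKerEquivOfSurjective f hfs).toEquiv
    _ = p ^ (2 * e + 2) := bgroup_card _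
  · exact (QuotientGroup.quotientKerEquivOfSurjective f hfs).symm

end DirII

/-- The quotients of the Heisenberg group `H = H(F_{p^e})` by
subgroups `N ≤ H'` of index `p^(2e+2)` are, up to isomorphism, exactly the groups
`B(L₁, L₂)` where `{L₁, L₂}` is a linearly independent pair of `e × e` matrices
over `Z_p` with `L₁` invertible and `L₁⁻¹L₂` having an irreducible minimal
polynomial of degree `e`. -/
theorem heisenberg_quotient_iff_bgroup_genus_two
    (p e : ℕ) [Fact p.Prime] (he : e.Prime) (hp2 : 2 < p) (he2 : 2 < e)
    (K : Type) [Field K] [Fintype K] (hK : Fintype.card K = p ^ e) :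
    (∀ (N : Subgroup (Heisenberg K)) (hn : N.Normal),
      N ≤ commutator (Heisenberg K) → N.index = p ^ (2 * e + 2) →
      ∃ L₁ L₂ : Matrix (Fin e) (Fin e) (ZMod p),
        LinearIndependent (ZMod p) ![L₁, L₂] ∧ IsUnit L₁ ∧
        Irreducible (minpoly (ZMod p) (L₁⁻¹ * L₂)) ∧
        (minpoly (ZMod p) (L₁⁻¹ * L₂)).natDegree = e ∧
        Nonempty ((Heisenberg K ⧸ N) ≃* BGroup p e e 2 ![L₁, L₂])) ∧
    (∀ L₁ L₂ : Matrix (Fin e) (Fin e) (ZMod p),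
      LinearIndependent (ZMod p) ![L₁, L₂] → IsUnit L₁ →
      Irreducible (minpoly (ZMod p) (L₁⁻¹ * L₂)) →
      (minpoly (ZMod p) (L₁⁻¹ * L₂)).natDegree = e →
      ∃ (N : Subgroup (Heisenberg K)) (hn : N.Normal),
        N ≤ commutator (Heisenberg K) ∧ N.index = p ^ (2 * e + 2) ∧
        Nonempty (BGroup p e e 2 ![L₁, L₂] ≃* (Heisenberg K ⧸ N))) := by
  have hp : p.Prime := Fact.out
  -- the characteristic of K is p
  have hqp : (ringChar K).Prime := CharP.char_is_prime K (ringChar K)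
  obtain ⟨n, -, hn⟩ := FiniteField.card K (ringChar K)
  have hpq : p = ringChar K := by
    have hdvd : p ∣ (ringChar K) ^ (n : ℕ) := by
      rw [← hn, hK]
      exact dvd_pow_self p (by omega : e ≠ 0)
    exact ((Nat.prime_dvd_prime_iff_eq hp hqp).mp (hp.dvd_of_dvd_pow hdvd))
  haveI hchar : CharP K p := hpq ▸ ringChar.charP K
  letI : Algebra (ZMod p) K := ZMod.algebra K p
  haveI : FiniteDimensional (ZMod p) K := Module.Finite.of_finite
  have hrank : Module.finrank (ZMod p) K = e := by
    have h1 : Fintype.card K = p ^ Module.finrank (ZMod p) K := by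
      rw [Module.card_eq_pow_finrank (K := ZMod p) (V := K), ZMod.card]
    rw [hK] at h1
    exact (Nat.pow_right_injective hp.two_le h1).symm
  constructor
  · intro N hn hle hidx
    exact dirI he he2 hrank N hn hle hidx
  · intro L₁ L₂ _ hunit hirr hdeg
    obtain ⟨N, hnn, h1, h2, h3⟩ := dirII he2 hrank L₁ L₂ hunit hirr hdeg
    exact ⟨N, hnn, h1, h2, h3⟩
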